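/- In a k-connected graph, let F be the set of edges st with κ(s,t) = k and both endpoints of degree strictly greater than k. Then F forms a forest (contains no cycle); in particular |F| ≤ n − 1. -/

import Mathlib

open Set

variable {V : Type*} [Fintype V] [DecidableEq V]

/-- The boundary (neighborhood) of a vertex set: vertices outside `A` adjacent to `A`. -/
def bdry (G : SimpleGraph V) (A : Set V) : Set V := {v | v ∉ A ∧ ∃ a ∈ A, G.Adj a v}

/-- The "node complement" `A* = V \ (A ∪ ∂A)`. -/
def nstar (G : SimpleGraph V) (A : Set V) : Set V := (A ∪ bdry G A)ᶜ

/-- `C` is a vertex set separating `s` from `t`. -/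
def IsSep (G : SimpleGraph V) (s t : V) (C : Set V) : Prop :=
  s ∉ C ∧ t ∉ C ∧ ∀ p : G.Walk s t, ∃ v ∈ C, v ∈ p.support

/-- `κ(s,t)`: minimum size of an `s`–`t` vertex cut. -/
noncomputable def kappa (G : SimpleGraph V) (s t : V) : ℕ :=
  sInf {n | ∃ C : Set V, C.ncard = n ∧ IsSep G s t C}

/-- A set is tight if `|∂A| = k` and `A* ≠ ∅`. -/
def Tight (G : SimpleGraph V) (k : ℕ) (A : Set V) : Prop :=
  (bdry G A).ncard = k ∧ (nstar G A).Nonempty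

/-- A set is small if `|A| ≤ (n - k)/2`. -/
def SmallSet (k : ℕ) (A : Set V) : Prop := 2 * A.ncard + k ≤ Fintype.card V

/-- `G` is `k`-connected. -/
def KConn (G : SimpleGraph V) (k : ℕ) : Prop :=
  k + 1 ≤ Fintype.card V ∧
    ∀ s t : V, s ≠ t → ∀ C : Set V, IsSep G s t C → k ≤ C.ncard

/-- degree of a vertex -/
noncomputable def deg (G : SimpleGraph V) (v : V) : ℕ := (G.neighborSet v).ncard

/-- `X` is an `st`-tight set: `s ∈ X`, `t ∈ X*` and `|∂X| = κ(s,t)`. -/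
def TightST (G : SimpleGraph V) (s t : V) (X : Set V) : Prop :=
  s ∈ X ∧ t ∈ nstar G X ∧ (bdry G X).ncard = kappa G s t

/-- `R_s`: intersection of all small tight sets containing `s`. -/
def Rmin (G : SimpleGraph V) (k : ℕ) (s : V) : Set V :=
  ⋂₀ {A : Set V | Tight G k A ∧ SmallSet k A ∧ s ∈ A}

/-- Two sets are laminar if disjoint or one contains the other. -/
def Laminar (X Y : Set V) : Prop := Disjoint X Y ∨ X ⊆ Y ∨ Y ⊆ X

/-- `d`-degeneracy: every nonempty vertex subset has a vertex with at most `d`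
neighbors inside it. -/
def Degenerate (G : SimpleGraph V) (d : ℕ) : Prop :=
  ∀ W : Set V, W.Nonempty → ∃ v ∈ W, (G.neighborSet v ∩ W).ncard ≤ d

/-- The set of vertices reachable from `s` avoiding `C`. -/
def Reach (G : SimpleGraph V) (C : Set V) (s : V) : Set V :=
  {v | ∃ p : G.Walk s v, ∀ u ∈ p.support, u ∉ C}


set_option linter.unusedSectionVars false

section SecA

variable {G : SimpleGraph V} {A B : Set V}

lemma bdry_disj (G : SimpleGraph V) (A : Set V) : A ∩ bdry G A = ∅ := by
  ext v; simp only [mem_inter_iff, mem_empty_iff_false, iff_false]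
  rintro ⟨hv, hv', _⟩; exact hv' hv

lemma nstar_disj_left (G : SimpleGraph V) (A : Set V) : A ∩ nstar G A = ∅ := by
  ext v; simp only [nstar, mem_inter_iff, mem_compl_iff, mem_union, mem_empty_iff_false, iff_false]
  rintro ⟨hv, hv'⟩; exact hv' (Or.inl hv)

lemma nstar_disj_bdry (G : SimpleGraph V) (A : Set V) : bdry G A ∩ nstar G A = ∅ := by
  ext v; simp only [nstar, mem_inter_iff, mem_compl_iff, mem_union, mem_empty_iff_false, iff_false]
  rintro ⟨hv, hv'⟩; exact hv' (Or.inr hv)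

lemma mem_nstar_iff {v : V} : v ∈ nstar G A ↔ v ∉ A ∧ ∀ a ∈ A, ¬ G.Adj a v := by
  simp only [nstar, mem_compl_iff, mem_union, bdry, mem_setOf_eq]
  constructor
  · intro h
    push_neg at h
    exact ⟨h.1, h.2 h.1⟩
  · rintro ⟨h1, h2⟩
    push_neg
    exact ⟨h1, fun _ => h2⟩

lemma not_adj_of_mem_nstar {v a : V} (hv : v ∈ nstar G A) (ha : a ∈ A) : ¬ G.Adj a v :=
  (mem_nstar_iff.mp hv).2 a ha

/-- The universe is partitioned into `A`, `bdry A`, `nstar A`. -/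
lemma union_bdry_nstar (G : SimpleGraph V) (A : Set V) : A ∪ bdry G A ∪ nstar G A = univ := by
  rw [nstar, union_compl_self]

lemma mem_bdry_of_adj {v a : V} (hv : v ∉ A) (ha : a ∈ A) (hadj : G.Adj a v) : v ∈ bdry G A :=
  ⟨hv, a, ha, hadj⟩

/-- Neighbours of a point of `A` lie in `A ∪ bdry A`. -/
lemma adj_mem_union_bdry {a v : V} (ha : a ∈ A) (hadj : G.Adj a v) : v ∈ A ∪ bdry G A := by
  by_cases hv : v ∈ A
  · exact Or.inl hv
  · exact Or.inr (mem_bdry_of_adj hv ha hadj)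

/-- Corner bound : `bdry (A ∩ B) ⊆ (A ∩ bdry B) ∪ (bdry A ∩ B) ∪ (bdry A ∩ bdry B)`. -/
lemma bdry_inter_subset (G : SimpleGraph V) (A B : Set V) :
    bdry G (A ∩ B) ⊆ (A ∩ bdry G B) ∪ (bdry G A ∩ B) ∪ (bdry G A ∩ bdry G B) := by
  rintro v ⟨hv, a, ⟨haA, haB⟩, hadj⟩
  have h1 : v ∈ A ∪ bdry G A := adj_mem_union_bdry haA hadj
  have h2 : v ∈ B ∪ bdry G B := adj_mem_union_bdry haB hadj
  rcases h1 with h1 | h1 <;> rcases h2 with h2 | h2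
  · exact absurd ⟨h1, h2⟩ hv
  · exact Or.inl (Or.inl ⟨h1, h2⟩)
  · exact Or.inl (Or.inr ⟨h1, h2⟩)
  · exact Or.inr ⟨h1, h2⟩

lemma bdry_union_subset (G : SimpleGraph V) (A B : Set V) :
    bdry G (A ∪ B) ⊆ (bdry G A ∪ bdry G B) \ (A ∪ B) := by
  rintro v ⟨hv, a, ha, hadj⟩
  refine ⟨?_, hv⟩
  rcases ha with ha | ha
  · by_cases hvA : v ∈ A
    · exact absurd (Or.inl hvA) hv
    · exact Or.inl (mem_bdry_of_adj hvA ha hadj)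
  · by_cases hvB : v ∈ B
    · exact absurd (Or.inr hvB) hv
    · exact Or.inr (mem_bdry_of_adj hvB ha hadj)

lemma nstar_inter_supset_left (G : SimpleGraph V) (A B : Set V) :
    nstar G A ⊆ nstar G (A ∩ B) := by
  intro v hv
  rw [mem_nstar_iff] at hv ⊢
  exact ⟨fun h => hv.1 h.1, fun a ha => hv.2 a ha.1⟩

lemma nstar_union_eq (G : SimpleGraph V) (A B : Set V) :
    nstar G (A ∪ B) = nstar G A ∩ nstar G B := by
  ext v
  simp only [mem_nstar_iff, mem_inter_iff, mem_union]
  constructor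
  · rintro ⟨h1, h2⟩
    push_neg at h1
    exact ⟨⟨h1.1, fun a ha => h2 a (Or.inl ha)⟩, ⟨h1.2, fun a ha => h2 a (Or.inr ha)⟩⟩
  · rintro ⟨⟨h1, h2⟩, ⟨h3, h4⟩⟩
    refine ⟨by tauto, ?_⟩
    rintro a (ha | ha)
    · exact h2 a ha
    · exact h4 a ha

/-- `bdry (nstar A) ⊆ bdry A`. -/
lemma bdry_nstar_subset (G : SimpleGraph V) (A : Set V) : bdry G (nstar G A) ⊆ bdry G A := by
  rintro v ⟨hv, a, ha, hadj⟩
  by_cases hvA : v ∈ A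
  · exact absurd (hadj.symm) (not_adj_of_mem_nstar ha hvA)
  · -- v ∉ nstar A and v ∉ A so v ∈ bdry A
    have := union_bdry_nstar G A
    have hvmem : v ∈ A ∪ bdry G A ∪ nstar G A := by rw [this]; trivial
    rcases hvmem with (h | h) | h
    · exact absurd h hvA
    · exact h
    · exact absurd h hv

lemma three_disjoint_ncard_le {S P Q R : Set V} (hP : P ⊆ S) (hQ : Q ⊆ S) (hR : R ⊆ S)
    (hPQ : Disjoint P Q) (hPR : Disjoint P R) (hQR : Disjoint Q R) :
    P.ncard + Q.ncard + R.ncard ≤ S.ncard := by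
  have h1 : (P ∪ Q).ncard = P.ncard + Q.ncard := Set.ncard_union_eq hPQ (toFinite P) (toFinite Q)
  have h2 : (P ∪ Q ∪ R).ncard = (P ∪ Q).ncard + R.ncard := by
    refine Set.ncard_union_eq ?_ (toFinite _) (toFinite R)
    exact Set.disjoint_union_left.mpr ⟨hPR, hQR⟩
  have h3 : (P ∪ Q ∪ R) ⊆ S := union_subset (union_subset hP hQ) hR
  have := Set.ncard_le_ncard h3 (toFinite S)
  omega

end SecA

section SecB
variable {G : SimpleGraph V} {A : Set V} {k : ℕ}

/-- Any walk starting in `A` and ending outside `A` meets `bdry A`. -/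
lemma walk_meets_bdry : ∀ {a z : V} (p : G.Walk a z), a ∈ A → z ∉ A →
    ∃ v ∈ bdry G A, v ∈ p.support := by
  intro a z p
  induction p with
  | nil => intro ha hz; exact absurd ha hz
  | @cons u w z hadj q ih =>
    intro ha hz
    by_cases hw : w ∈ A
    · obtain ⟨v, hv1, hv2⟩ := ih hw hz
      exact ⟨v, hv1, by simp [SimpleGraph.Walk.support_cons, hv2]⟩
    · exact ⟨w, mem_bdry_of_adj hw ha hadj,
        by simp [SimpleGraph.Walk.support_cons, SimpleGraph.Walk.start_mem_support]⟩

/-- `bdry A` separates any `a ∈ A` from any `z ∈ nstar A`. -/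
lemma isSep_bdry {a z : V} (ha : a ∈ A) (hz : z ∈ nstar G A) : IsSep G a z (bdry G A) := by
  refine ⟨fun h => h.1 ha, fun h => ?_, fun p => walk_meets_bdry p ha ?_⟩
  · rw [nstar, mem_compl_iff] at hz; exact hz (Or.inr h)
  · rw [nstar, mem_compl_iff] at hz; intro h; exact hz (Or.inl h)

/-- The key connectivity lower bound: a set with nonempty inside and outside has
boundary of size at least `k`. -/
lemma k_le_ncard_bdry (hG : KConn G k) (hA : A.Nonempty) (hA' : (nstar G A).Nonempty) :
    k ≤ (bdry G A).ncard := by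
  obtain ⟨a, ha⟩ := hA
  obtain ⟨z, hz⟩ := hA'
  have haz : a ≠ z := by
    rintro rfl
    rw [nstar, mem_compl_iff] at hz
    exact hz (Or.inl ha)
  exact hG.2 a z haz _ (isSep_bdry ha hz)

end SecB

section SecC
variable {G : SimpleGraph V} {A B : Set V} {k : ℕ}

lemma bdry_submodular (G : SimpleGraph V) (A B : Set V) :
    (bdry G (A ∩ B)).ncard + (bdry G (A ∪ B)).ncard
      ≤ (bdry G A).ncard + (bdry G B).ncard := by
  set S := bdry G A with hS
  set S' := bdry G B with hS'
  set U₁ := bdry G (A ∩ B) with hU₁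
  set U₂ := bdry G (A ∪ B) with hU₂
  have hU₁sub : U₁ ⊆ S ∪ S' := by
    rintro v ⟨hv, a, ⟨haA, haB⟩, hadj⟩
    rcases adj_mem_union_bdry haA hadj with h | h
    · rcases adj_mem_union_bdry haB hadj with h' | h'
      · exact absurd ⟨h, h'⟩ hv
      · exact Or.inr h'
    · exact Or.inl h
  have hU₂sub : U₂ ⊆ S ∪ S' := by
    rintro v ⟨hv, a, ha, hadj⟩
    rcases ha with ha | ha
    · by_cases hvA : v ∈ A
      · exact absurd (Or.inl hvA) hv
      · exact Or.inl (mem_bdry_of_adj hvA ha hadj)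
    · by_cases hvB : v ∈ B
      · exact absurd (Or.inr hvB) hv
      · exact Or.inr (mem_bdry_of_adj hvB ha hadj)
  have hInter : U₁ ∩ U₂ ⊆ S ∩ S' := by
    rintro v ⟨⟨hv1, a, ⟨haA, haB⟩, hadj⟩, hv2, _⟩
    have hvA : v ∉ A := fun h => hv2 (Or.inl h)
    have hvB : v ∉ B := fun h => hv2 (Or.inr h)
    exact ⟨mem_bdry_of_adj hvA haA hadj, mem_bdry_of_adj hvB haB hadj⟩
  have e1 : (U₁ ∪ U₂).ncard + (U₁ ∩ U₂).ncard = U₁.ncard + U₂.ncard :=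
    Set.ncard_union_add_ncard_inter U₁ U₂ (toFinite _) (toFinite _)
  have e2 : (S ∪ S').ncard + (S ∩ S').ncard = S.ncard + S'.ncard :=
    Set.ncard_union_add_ncard_inter S S' (toFinite _) (toFinite _)
  have le1 : (U₁ ∪ U₂).ncard ≤ (S ∪ S').ncard :=
    Set.ncard_le_ncard (union_subset hU₁sub hU₂sub) (toFinite _)
  have le2 : (U₁ ∩ U₂).ncard ≤ (S ∩ S').ncard :=
    Set.ncard_le_ncard hInter (toFinite _)
  omega

/-- Uncrossing: if `A`, `B` are tight, `A ∩ B ≠ ∅` and `nstar A ∩ nstar B ≠ ∅`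
then `A ∩ B` is tight. -/
lemma tight_inter (hG : KConn G k) (hA : Tight G k A) (hB : Tight G k B)
    (hAB : (A ∩ B).Nonempty) (hN : (nstar G A ∩ nstar G B).Nonempty) :
    Tight G k (A ∩ B) := by
  have hn1 : (nstar G (A ∩ B)).Nonempty := hA.2.mono (nstar_inter_supset_left G A B)
  have hge1 : k ≤ (bdry G (A ∩ B)).ncard := k_le_ncard_bdry hG hAB hn1
  have hn2 : (nstar G (A ∪ B)).Nonempty := by rw [nstar_union_eq]; exact hN
  have hge2 : k ≤ (bdry G (A ∪ B)).ncard := by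
    refine k_le_ncard_bdry hG ?_ hn2
    exact hAB.mono (inter_subset_left.trans subset_union_left)
  have := bdry_submodular G A B
  rw [hA.1, hB.1] at this
  exact ⟨by omega, hn1⟩

end SecC

section SecD
variable {G : SimpleGraph V} {k : ℕ}

/-- Walk-reversal symmetry of separation. -/
lemma IsSep.symm {G : SimpleGraph V} {s t : V} {C : Set V} (h : IsSep G s t C) :
    IsSep G t s C := by
  refine ⟨h.2.1, h.1, fun p => ?_⟩
  obtain ⟨v, hv1, hv2⟩ := h.2.2 p.reverse
  refine ⟨v, hv1, ?_⟩
  rwa [SimpleGraph.Walk.support_reverse, List.mem_reverse] at hv2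

lemma mem_reach_self {G : SimpleGraph V} {C : Set V} {x : V} (hx : x ∉ C) : x ∈ Reach G C x :=
  ⟨SimpleGraph.Walk.nil, by simpa using hx⟩

lemma reach_disjoint_sep {G : SimpleGraph V} {C : Set V} {x v : V} (hv : v ∈ Reach G C x) :
    v ∉ C := by
  obtain ⟨p, hp⟩ := hv
  exact hp v p.end_mem_support

lemma reach_closed {G : SimpleGraph V} {C : Set V} {x v w : V} (hv : v ∈ Reach G C x)
    (hadj : G.Adj v w) (hw : w ∉ C) : w ∈ Reach G C x := by
  obtain ⟨p, hp⟩ := hv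
  refine ⟨p.concat hadj, fun u hu => ?_⟩
  rw [SimpleGraph.Walk.support_concat, List.mem_append] at hu
  rcases hu with hu | hu
  · exact hp u hu
  · simp only [List.mem_singleton] at hu; subst hu; exact hw

/-- Two Reach sets from separated vertices are disjoint. -/
lemma reach_reach_disjoint {G : SimpleGraph V} {C : Set V} {x y : V} (hsep : IsSep G x y C) :
    Reach G C x ∩ Reach G C y = ∅ := by
  ext z
  simp only [mem_inter_iff, mem_empty_iff_false, iff_false, not_and]
  rintro ⟨p, hp⟩ ⟨q, hq⟩
  obtain ⟨v, hv1, hv2⟩ := hsep.2.2 (p.append q.reverse)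
  rw [SimpleGraph.Walk.mem_support_append_iff] at hv2
  rcases hv2 with hv2 | hv2
  · exact hp v hv2 hv1
  · rw [SimpleGraph.Walk.support_reverse, List.mem_reverse] at hv2
    exact hq v hv2 hv1

/-- The target is not reachable. -/
lemma target_not_mem_reach {G : SimpleGraph V} {C : Set V} {x y : V} (hsep : IsSep G x y C) :
    y ∉ Reach G C x := by
  rintro ⟨p, hp⟩
  obtain ⟨v, hv1, hv2⟩ := hsep.2.2 p
  exact hp v hv2 hv1

/-- The set of separator sizes is nonempty for a nonadjacent pair of distinct vertices. -/
lemma sepSet_nonempty {G : SimpleGraph V} {x y : V} (hne : x ≠ y) (hnadj : ¬ G.Adj x y) :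
    {n | ∃ C : Set V, C.ncard = n ∧ IsSep G x y C}.Nonempty := by
  refine ⟨(univ \ {x, y} : Set V).ncard, (univ \ {x, y} : Set V), rfl, ?_, ?_, ?_⟩
  · simp
  · simp
  · intro p
    cases p with
    | nil => exact absurd rfl hne
    | cons hadj q =>
      rename_i w
      have hwx : w ≠ x := fun h => G.irrefl (h ▸ hadj)
      have hwy : w ≠ y := fun h => hnadj (h ▸ hadj)
      refine ⟨w, ?_, ?_⟩
      · simp [hwx, hwy]
      · simp [SimpleGraph.Walk.support_cons, SimpleGraph.Walk.start_mem_support]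

/-- Existence of a minimum separator. -/
lemma exists_min_sep {G : SimpleGraph V} {x y : V} (hne : x ≠ y) (hnadj : ¬ G.Adj x y) :
    ∃ C : Set V, C.ncard = kappa G x y ∧ IsSep G x y C := by
  have := Nat.sInf_mem (sepSet_nonempty hne hnadj)
  exact this

end SecD

section SecD2
variable {G : SimpleGraph V} {k : ℕ}

/-- All the structure attached to one critical edge `xy`:  the two "sides" `P ∋ x`, `Q ∋ y`
and the separator `C2`. -/
structure EdgeSetup (G : SimpleGraph V) (k : ℕ) (x y : V) where
  P : Set V
  Q : Set V
  C2 : Set V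
  hxP : x ∈ P
  hyQ : y ∈ Q
  hPQ : P ∩ Q = ∅
  hPC : P ∩ C2 = ∅
  hQC : Q ∩ C2 = ∅
  hbP : bdry G P = C2 ∪ {y}
  hbQ : bdry G Q = C2 ∪ {x}
  htP : Tight G k P
  htQ : Tight G k Q
  hNy : G.neighborSet y ∩ P ⊆ {x}
  hNx : G.neighborSet x ∩ Q ⊆ {y}

namespace EdgeSetup

variable {x y : V} (E : EdgeSetup G k x y)

lemma hyP : y ∉ E.P := fun h => by
  have : y ∈ E.P ∩ bdry G E.P := ⟨h, by rw [E.hbP]; exact Or.inr rfl⟩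
  rw [show E.P ∩ bdry G E.P = ∅ from ?_] at this
  · exact this
  · ext v
    simp only [mem_inter_iff, mem_empty_iff_false, iff_false]
    rintro ⟨hv, hv', _⟩
    exact hv' hv

lemma hxQ : x ∉ E.Q := fun h => by
  have : x ∈ E.Q ∩ bdry G E.Q := ⟨h, by rw [E.hbQ]; exact Or.inr rfl⟩
  rw [show E.Q ∩ bdry G E.Q = ∅ from ?_] at this
  · exact this
  · ext v
    simp only [mem_inter_iff, mem_empty_iff_false, iff_false]
    rintro ⟨hv, hv', _⟩
    exact hv' hv

lemma hybP : y ∈ bdry G E.P := by rw [E.hbP]; exact Or.inr rfl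

lemma hxbQ : x ∈ bdry G E.Q := by rw [E.hbQ]; exact Or.inr rfl

/-- `Q \ {y} ⊆ nstar P`. -/
lemma q_diff_subset_nstarP : E.Q \ {y} ⊆ nstar G E.P := by
  rintro v ⟨hvQ, hvy⟩
  simp only [nstar, mem_compl_iff, mem_union]
  rintro (h | h)
  · have hmem : v ∈ E.P ∩ E.Q := ⟨h, hvQ⟩
    rw [E.hPQ] at hmem; exact hmem
  · rw [E.hbP] at h
    rcases h with h | h
    · have hmem : v ∈ E.Q ∩ E.C2 := ⟨hvQ, h⟩
      rw [E.hQC] at hmem; exact hmem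
    · exact hvy h

lemma p_diff_subset_nstarQ : E.P \ {x} ⊆ nstar G E.Q := by
  rintro v ⟨hvP, hvx⟩
  simp only [nstar, mem_compl_iff, mem_union]
  rintro (h | h)
  · have hmem : v ∈ E.P ∩ E.Q := ⟨hvP, h⟩
    rw [E.hPQ] at hmem; exact hmem
  · rw [E.hbQ] at h
    rcases h with h | h
    · have hmem : v ∈ E.P ∩ E.C2 := ⟨hvP, h⟩
      rw [E.hPC] at hmem; exact hmem
    · exact hvx h

end EdgeSetup

/-- One-sided construction of the `P`-side of an edge setup. -/
lemma reach_side (hG : KConn G k) {G' : SimpleGraph V} {x y : V} (hxy : G.Adj x y)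
    (hadj' : ∀ a b : V, G'.Adj a b ↔ G.Adj a b ∧ s(a, b) ≠ s(x, y))
    {C : Set V} (hCsep : IsSep G' x y C) (hCk : C.ncard + 1 = k) (hdy : k < deg G y) :
    x ∈ Reach G' C x ∧ Reach G' C x ∩ C = ∅ ∧ y ∉ Reach G' C x ∧
      bdry G (Reach G' C x) = C ∪ {y} ∧ Tight G k (Reach G' C x) ∧
      G.neighborSet y ∩ Reach G' C x ⊆ {x} := by
  have hne : x ≠ y := hxy.ne
  set P := Reach G' C x with hPdef
  have hxC : x ∉ C := hCsep.1
  have hyC : y ∉ C := hCsep.2.1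
  have hxP : x ∈ P := mem_reach_self hxC
  have hPC : P ∩ C = ∅ := by
    ext v
    simp only [mem_inter_iff, mem_empty_iff_false, iff_false, not_and]
    exact fun hv => reach_disjoint_sep hv
  have hyP : y ∉ P := target_not_mem_reach hCsep
  -- the boundary is contained in C ∪ {y}
  have hbsub : bdry G P ⊆ C ∪ {y} := by
    rintro v ⟨hvP, a, haP, hadj⟩
    by_cases he : s(a, v) = s(x, y)
    · rw [Sym2.eq_iff] at he
      rcases he with ⟨rfl, rfl⟩ | ⟨rfl, rfl⟩
      · exact Or.inr rfl
      · exact absurd haP hyP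
    · have : G'.Adj a v := (hadj' a v).mpr ⟨hadj, he⟩
      by_cases hvC : v ∈ C
      · exact Or.inl hvC
      · exact absurd (reach_closed haP this hvC) hvP
  have hybP : y ∈ bdry G P := ⟨hyP, x, hxP, hxy⟩
  -- a neighbour of y outside C ∪ {x} exists
  have hw : ∃ w, G.Adj y w ∧ w ∉ C ∧ w ≠ x := by
    by_contra h
    push_neg at h
    have hsub : G.neighborSet y ⊆ insert x C := by
      intro w hw
      by_cases hC : w ∈ C
      · exact Or.inr hC
      · exact Or.inl (h w hw hC)
    have h1 : deg G y ≤ (insert x C).ncard := Set.ncard_le_ncard hsub (toFinite _)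
    have h2 : (insert x C).ncard = C.ncard + 1 := Set.ncard_insert_of_notMem hxC (toFinite _)
    omega
  obtain ⟨w, hwadj, hwC, hwx⟩ := hw
  have hwy : w ≠ y := fun h => G.irrefl (h ▸ hwadj)
  have hwG' : G'.Adj y w := by
    refine (hadj' y w).mpr ⟨hwadj, ?_⟩
    rw [Ne, Sym2.eq_iff]
    rintro (⟨rfl, rfl⟩ | ⟨-, rfl⟩)
    · exact hne rfl
    · exact hwx rfl
  have hwQ : w ∈ Reach G' C y := reach_closed (mem_reach_self hyC) hwG' hwC
  have hwP : w ∉ P := by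
    have := reach_reach_disjoint hCsep
    intro h
    have : w ∈ Reach G' C x ∩ Reach G' C y := ⟨h, hwQ⟩
    rw [reach_reach_disjoint hCsep] at this
    exact this
  have hwn : w ∈ nstar G P := by
    simp only [nstar, mem_compl_iff, mem_union]
    rintro (h | h)
    · exact hwP h
    · rcases hbsub h with h | h
      · exact hwC h
      · exact hwy h
  -- boundary has exactly k elements
  have hCyk : (C ∪ {y}).ncard = k := by
    rw [union_singleton, Set.ncard_insert_of_notMem hyC (toFinite _)]
    omega
  have hk1 : k ≤ (bdry G P).ncard := k_le_ncard_bdry hG ⟨x, hxP⟩ ⟨w, hwn⟩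
  have hk2 : (bdry G P).ncard ≤ k := by
    rw [← hCyk]; exact Set.ncard_le_ncard hbsub (toFinite _)
  have hbP : bdry G P = C ∪ {y} := by
    refine Set.eq_of_subset_of_ncard_le hbsub ?_ (toFinite _)
    omega
  have hNy : G.neighborSet y ∩ P ⊆ {x} := by
    rintro v ⟨hvadj, hvP⟩
    simp only [SimpleGraph.mem_neighborSet] at hvadj
    by_contra hvx
    simp only [mem_singleton_iff] at hvx
    have he : s(v, y) ≠ s(x, y) := by
      rw [Ne, Sym2.eq_iff]
      rintro (⟨rfl, -⟩ | ⟨rfl, rfl⟩)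
      · exact hvx rfl
      · exact hvx rfl
    have : G'.Adj v y := (hadj' v y).mpr ⟨hvadj.symm, he⟩
    exact hyP (reach_closed hvP this hyC)
  exact ⟨hxP, hPC, hyP, hbP, ⟨by rw [hbP]; exact hCyk, ⟨w, hwn⟩⟩, hNy⟩

/-- Main construction: a critical edge (with high-degree endpoints) gives an `EdgeSetup`. -/
lemma exists_edgeSetup (hG : KConn G k) {x y : V} (hxy : G.Adj x y)
    (hkap : kappa (G.deleteEdges {s(x, y)}) x y + 1 = k)
    (hdx : k < deg G x) (hdy : k < deg G y) :
    Nonempty (EdgeSetup G k x y) := by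
  set G' := G.deleteEdges {s(x, y)} with hG'
  have hadj' : ∀ a b : V, G'.Adj a b ↔ G.Adj a b ∧ s(a, b) ≠ s(x, y) := by
    intro a b
    rw [hG', SimpleGraph.deleteEdges_adj]
    simp
  have hne : x ≠ y := hxy.ne
  have hnadj' : ¬ G'.Adj x y := by
    rw [hadj']
    rintro ⟨-, h⟩
    exact h rfl
  obtain ⟨C, hCcard, hCsep⟩ := exists_min_sep hne hnadj'
  have hCk : C.ncard + 1 = k := by omega
  have hadj'' : ∀ a b : V, G'.Adj a b ↔ G.Adj a b ∧ s(a, b) ≠ s(y, x) := by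
    intro a b
    rw [show s(y, x) = s(x, y) from Sym2.eq_swap]
    exact hadj' a b
  obtain ⟨hxP, hPC, hyP, hbP, htP, hNy⟩ := reach_side hG hxy hadj' hCsep hCk hdy
  obtain ⟨hyQ, hQC, hxQ, hbQ, htQ, hNx⟩ := reach_side hG hxy.symm hadj'' hCsep.symm hCk hdx
  exact ⟨⟨Reach G' C x, Reach G' C y, C, hxP, hyQ, reach_reach_disjoint hCsep,
    hPC, hQC, hbP, hbQ, htP, htQ, hNy, hNx⟩⟩

end SecD2

section SecE
variable {G : SimpleGraph V} {k : ℕ} {R : V → V → Prop}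

/-- The family over which we minimise. -/
def Good (G : SimpleGraph V) (k : ℕ) (R : V → V → Prop) (A : Set V) (a b : V) : Prop :=
  Tight G k A ∧ a ∈ A ∧ b ∈ bdry G A ∧ R a b ∧ G.neighborSet b ∩ A ⊆ {a}

lemma Good.of_setup (E : EdgeSetup G k x y) (hR : R x y) : Good G k R E.P x y :=
  ⟨E.htP, E.hxP, E.hybP, hR, E.hNy⟩

lemma Good.of_setup' (E : EdgeSetup G k x y) (hRsymm : ∀ {a b : V}, R a b → R b a)
    (hR : R x y) : Good G k R E.Q y x :=
  ⟨E.htQ, E.hyQ, E.hxbQ, hRsymm hR, E.hNx⟩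

/-- The shared counting core: `B` is a minimum-size member of the family, and
`(W, W', C2)` is the edge-setup of an `R`-edge with corner `B ∩ W` nonempty but not
tight, `e` the distinguished boundary vertex of `W`, `e ∈ B ∪ bdry B`, and the other
side `W'` has size at least `μ`.  This is impossible. -/
theorem counting_core (hG : KConn G k) {B W W' C2 : Set V} {μ : ℕ} {e : V}
    (htB : Tight G k B) (hBcard : B.ncard = μ)
    (htW : Tight G k W)
    (hWW' : W ∩ W' = ∅) (hWC : W ∩ C2 = ∅) (hW'C : W' ∩ C2 = ∅)
    (hbW : bdry G W = C2 ∪ {e})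
    (hW'nstar : W' \ {e} ⊆ nstar G W)
    (hx : (B ∩ W).Nonempty)
    (hnotight : ¬ Tight G k (B ∩ W))
    (heBS : e ∈ B ∪ bdry G B)
    (hmuW' : μ ≤ W'.ncard) : False := by
  set S := bdry G B with hS
  have hSk : S.ncard = k := htB.1
  have hBS : B ∩ S = ∅ := bdry_disj G B
  -- not tight gives: nstar B ∩ nstar W = ∅
  have hns : nstar G B ∩ nstar G W = ∅ := by
    by_contra h
    rw [← ne_eq, ← nonempty_iff_ne_empty] at h
    exact hnotight (tight_inter hG htB htW hx h)
  -- hence W' ⊆ B ∪ S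
  have hW'sub : W' ⊆ B ∪ S := by
    intro v hv
    by_cases hve : v = e
    · subst hve; exact heBS
    · have hv' : v ∈ nstar G W := hW'nstar ⟨hv, hve⟩
      have hvn : v ∉ nstar G B := by
        intro h
        have : v ∈ nstar G B ∩ nstar G W := ⟨h, hv'⟩
        rw [hns] at this; exact this
      have : v ∈ B ∪ S ∪ nstar G B := by rw [union_bdry_nstar]; trivial
      rcases this with h | h
      · exact h
      · exact absurd h hvn
  -- |bdry (B ∩ W)| ≥ k + 1
  have hk1 : k + 1 ≤ (bdry G (B ∩ W)).ncard := by
    have hge : k ≤ (bdry G (B ∩ W)).ncard := by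
      refine k_le_ncard_bdry hG hx (htB.2.mono ?_)
      exact nstar_inter_supset_left G B W
    rcases Nat.lt_or_ge k (bdry G (B ∩ W)).ncard with h | h
    · omega
    · exact absurd ⟨le_antisymm h hge, (htB.2.mono (nstar_inter_supset_left G B W))⟩ hnotight
  -- upper bound on the boundary of the corner
  have hsub : bdry G (B ∩ W) ⊆ (B ∩ (C2 ∪ {e})) ∪ (S ∩ W) ∪ (S ∩ (C2 ∪ {e})) := by
    intro v hv
    rcases bdry_inter_subset G B W hv with (h | h) | h
    · rw [hbW] at h; exact Or.inl (Or.inl h)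
    · exact Or.inl (Or.inr h)
    · rw [hbW] at h; exact Or.inr h
  have hup : (bdry G (B ∩ W)).ncard ≤
      (B ∩ (C2 ∪ {e})).ncard + (S ∩ W).ncard + (S ∩ (C2 ∪ {e})).ncard := by
    calc (bdry G (B ∩ W)).ncard
        ≤ ((B ∩ (C2 ∪ {e})) ∪ (S ∩ W) ∪ (S ∩ (C2 ∪ {e}))).ncard :=
          Set.ncard_le_ncard hsub (toFinite _)
      _ ≤ ((B ∩ (C2 ∪ {e})) ∪ (S ∩ W)).ncard + (S ∩ (C2 ∪ {e})).ncard := Set.ncard_union_le _ _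
      _ ≤ (B ∩ (C2 ∪ {e})).ncard + (S ∩ W).ncard + (S ∩ (C2 ∪ {e})).ncard := by
          have := Set.ncard_union_le (B ∩ (C2 ∪ {e})) (S ∩ W)
          omega
  -- split off the {e} parts
  have hBe : (B ∩ (C2 ∪ {e})).ncard ≤ (B ∩ C2).ncard + (B ∩ {e}).ncard := by
    have h1 : B ∩ (C2 ∪ {e}) ⊆ (B ∩ C2) ∪ (B ∩ {e}) := by
      rintro v ⟨hv1, hv2 | hv2⟩
      · exact Or.inl ⟨hv1, hv2⟩
      · exact Or.inr ⟨hv1, hv2⟩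
    calc (B ∩ (C2 ∪ {e})).ncard ≤ ((B ∩ C2) ∪ (B ∩ {e})).ncard :=
        Set.ncard_le_ncard h1 (toFinite _)
      _ ≤ (B ∩ C2).ncard + (B ∩ {e}).ncard := Set.ncard_union_le _ _
  have hSe : (S ∩ (C2 ∪ {e})).ncard ≤ (S ∩ C2).ncard + (S ∩ {e}).ncard := by
    have h1 : S ∩ (C2 ∪ {e}) ⊆ (S ∩ C2) ∪ (S ∩ {e}) := by
      rintro v ⟨hv1, hv2 | hv2⟩
      · exact Or.inl ⟨hv1, hv2⟩
      · exact Or.inr ⟨hv1, hv2⟩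
    calc (S ∩ (C2 ∪ {e})).ncard ≤ ((S ∩ C2) ∪ (S ∩ {e})).ncard :=
        Set.ncard_le_ncard h1 (toFinite _)
      _ ≤ (S ∩ C2).ncard + (S ∩ {e}).ncard := Set.ncard_union_le _ _
  -- e is in at most one of B, S
  have he1 : (B ∩ {e}).ncard + (S ∩ {e}).ncard ≤ 1 := by
    have hdisj : Disjoint (B ∩ {e}) (S ∩ {e}) :=
      (Set.disjoint_iff_inter_eq_empty.mpr hBS).mono inter_subset_left inter_subset_left
    have heq := Set.ncard_union_eq hdisj (toFinite _) (toFinite _)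
    have hsub2 : (B ∩ {e}) ∪ (S ∩ {e}) ⊆ ({e} : Set V) := by
      rintro v (⟨-, h⟩ | ⟨-, h⟩) <;> exact h
    have hle2 := Set.ncard_le_ncard hsub2 (toFinite _)
    rw [Set.ncard_singleton] at hle2
    omega
  -- triple disjointness inside S
  have hdWC : Disjoint W C2 := Set.disjoint_iff_inter_eq_empty.mpr hWC
  have hdWW' : Disjoint W W' := Set.disjoint_iff_inter_eq_empty.mpr hWW'
  have hdCW' : Disjoint C2 W' := (Set.disjoint_iff_inter_eq_empty.mpr hW'C).symm
  have hdisjWC : Disjoint (S ∩ W) (S ∩ C2) :=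
    hdWC.mono inter_subset_right inter_subset_right
  have hdisjWW' : Disjoint (S ∩ W) (S ∩ W') :=
    hdWW'.mono inter_subset_right inter_subset_right
  have hdisjCW' : Disjoint (S ∩ C2) (S ∩ W') :=
    hdCW'.mono inter_subset_right inter_subset_right
  have htripleS : (S ∩ W).ncard + (S ∩ C2).ncard + (S ∩ W').ncard ≤ k := by
    rw [← hSk]
    exact three_disjoint_ncard_le inter_subset_left inter_subset_left inter_subset_left
      hdisjWC hdisjWW' hdisjCW'
  -- decomposition of W'
  have hW'le : W'.ncard ≤ (B ∩ W').ncard + (S ∩ W').ncard := by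
    have h1 : W' ⊆ (B ∩ W') ∪ (S ∩ W') := by
      intro v hv
      rcases hW'sub hv with h | h
      · exact Or.inl ⟨h, hv⟩
      · exact Or.inr ⟨h, hv⟩
    calc W'.ncard ≤ ((B ∩ W') ∪ (S ∩ W')).ncard := Set.ncard_le_ncard h1 (toFinite _)
      _ ≤ (B ∩ W').ncard + (S ∩ W').ncard := Set.ncard_union_le _ _
  -- triple disjointness inside B
  have hdisjBWC : Disjoint (B ∩ W) (B ∩ C2) :=
    hdWC.mono inter_subset_right inter_subset_right
  have hdisjBWW' : Disjoint (B ∩ W) (B ∩ W') :=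
    hdWW'.mono inter_subset_right inter_subset_right
  have hdisjBCW' : Disjoint (B ∩ C2) (B ∩ W') :=
    hdCW'.mono inter_subset_right inter_subset_right
  have htripleB : (B ∩ W).ncard + (B ∩ C2).ncard + (B ∩ W').ncard ≤ μ := by
    rw [← hBcard]
    exact three_disjoint_ncard_le inter_subset_left inter_subset_left inter_subset_left
      hdisjBWC hdisjBWW' hdisjBCW'
  have hBW1 : 1 ≤ (B ∩ W).ncard := by
    have := (Set.ncard_pos (toFinite (B ∩ W))).mpr hx
    omega
  omega

/-- Inner-edge lemma: a minimum member of the family cannot contain both ends of an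
`R`-edge. -/
theorem inner_edge_contra (hG : KConn G k)
    (hRsymm : ∀ {a b : V}, R a b → R b a)
    (hRadj : ∀ {a b : V}, R a b → G.Adj a b)
    (hRsetup : ∀ {a b : V}, R a b → Nonempty (EdgeSetup G k a b))
    {μ : ℕ} (hmin : ∀ A a b, Good G k R A a b → μ ≤ A.ncard)
    {B : Set V} (htB : Tight G k B) (hBcard : B.ncard = μ)
    {x₁ x₂ : V} (h1 : x₁ ∈ B) (h2 : x₂ ∈ B) (hR12 : R x₁ x₂) : False := by
  obtain ⟨E⟩ := hRsetup hR12
  have hx1Q : x₁ ∉ E.Q := E.hxQ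
  by_cases htA : Tight G k (B ∩ E.Q)
  · -- the corner is tight, giving a strictly smaller member: contradiction
    have hgood : Good G k R (B ∩ E.Q) x₂ x₁ := by
      refine ⟨htA, ⟨h2, E.hyQ⟩, ?_, hRsymm hR12, ?_⟩
      · exact mem_bdry_of_adj (fun h => hx1Q h.2) ⟨h2, E.hyQ⟩ (hRadj hR12).symm
      · intro v hv
        exact E.hNx ⟨hv.1, hv.2.2⟩
    have hle : μ ≤ (B ∩ E.Q).ncard := hmin _ _ _ hgood
    have hlt : (B ∩ E.Q).ncard < B.ncard := by
      refine Set.ncard_lt_ncard ?_ (toFinite B)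
      refine ⟨inter_subset_left, fun h => ?_⟩
      exact hx1Q (h h1).2
    omega
  · -- the corner is not tight: counting contradiction
    refine counting_core hG htB hBcard E.htQ ?_ E.hQC E.hPC E.hbQ
      E.p_diff_subset_nstarQ ⟨x₂, h2, E.hyQ⟩ htA (Or.inl h1)
      (hmin _ _ _ (Good.of_setup E hR12))
    rw [inter_comm]; exact E.hPQ

/-- Exit-edge lemma: if `(x,y)` is an `R`-edge leaving a minimum member `B`, then `x`
is the only `B`-neighbour of `y`. -/
theorem exit_edge (hG : KConn G k)
    (hRsymm : ∀ {a b : V}, R a b → R b a)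
    (hRadj : ∀ {a b : V}, R a b → G.Adj a b)
    (hRsetup : ∀ {a b : V}, R a b → Nonempty (EdgeSetup G k a b))
    {μ : ℕ} (hmin : ∀ A a b, Good G k R A a b → μ ≤ A.ncard)
    {B : Set V} (htB : Tight G k B) (hBcard : B.ncard = μ)
    {x y : V} (hx : x ∈ B) (hy : y ∉ B) (hRxy : R x y) :
    G.neighborSet y ∩ B ⊆ {x} := by
  obtain ⟨E⟩ := hRsetup hRxy
  by_cases htA : Tight G k (B ∩ E.P)
  · have hgood : Good G k R (B ∩ E.P) x y := by
      refine ⟨htA, ⟨hx, E.hxP⟩, ?_, hRxy, ?_⟩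
      · exact mem_bdry_of_adj (fun h => hy h.1) ⟨hx, E.hxP⟩ (hRadj hRxy)
      · intro v hv
        exact E.hNy ⟨hv.1, hv.2.2⟩
    have hle : μ ≤ (B ∩ E.P).ncard := hmin _ _ _ hgood
    have heq : B ∩ E.P = B := by
      refine Set.eq_of_subset_of_ncard_le inter_subset_left ?_ (toFinite _)
      omega
    intro v hv
    have hvP : v ∈ E.P := by
      have : v ∈ B ∩ E.P := by rw [heq]; exact hv.2
      exact this.2
    exact E.hNy ⟨hv.1, hvP⟩
  · exfalso
    exact counting_core hG htB hBcard E.htP E.hPQ E.hPC E.hQC E.hbP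
      E.q_diff_subset_nstarP ⟨x, hx, E.hxP⟩ htA
      (Or.inr (mem_bdry_of_adj hy hx (hRadj hRxy)))
      (hmin _ _ _ (Good.of_setup' E hRsymm hRxy))

/-- Endgame: a minimum member of the family, whose inner vertex has two distinct
`R`-neighbours, contradicts `k`-connectivity. -/
theorem endgame (hG : KConn G k)
    (hRsymm : ∀ {a b : V}, R a b → R b a)
    (hRadj : ∀ {a b : V}, R a b → G.Adj a b)
    (hRsetup : ∀ {a b : V}, R a b → Nonempty (EdgeSetup G k a b))
    (hRdeg : ∀ {a b : V}, R a b → k < deg G a)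
    {μ : ℕ} (hmin : ∀ A a b, Good G k R A a b → μ ≤ A.ncard)
    {B : Set V} {s t : V} (hB : Good G k R B s t) (hBcard : B.ncard = μ)
    {s' : V} (hss' : R s s') (hs't : s' ≠ t) : False := by
  obtain ⟨htB, hsB, htS, hRst, hNt⟩ := hB
  set S := bdry G B with hSdef
  have hSk : S.ncard = k := htB.1
  by_cases hs'B : s' ∈ B
  · exact inner_edge_contra hG hRsymm hRadj hRsetup hmin htB hBcard hsB hs'B hss'
  have hNs' : G.neighborSet s' ∩ B ⊆ {s} :=
    exit_edge hG hRsymm hRadj hRsetup hmin htB hBcard hsB hs'B hss'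
  have hs'S : s' ∈ S := mem_bdry_of_adj hs'B hsB (hRadj hss')
  have htB' : t ∉ B := htS.1
  -- B ∖ {s} is nonempty, by the degree of s
  have hdeg : k < deg G s := hRdeg hss'
  have hBs : ∃ b, b ∈ B ∧ b ≠ s := by
    by_contra h
    push_neg at h
    have hsub : G.neighborSet s ⊆ S := by
      intro v hv
      rcases adj_mem_union_bdry hsB hv with h1 | h1
      · exact absurd hv (by rw [h v h1]; exact G.irrefl)
      · exact h1
    have hle := Set.ncard_le_ncard hsub (toFinite S)
    rw [hSk] at hle
    exact absurd hle (by rw [deg] at hdeg; omega)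
  obtain ⟨b₀, hb₀B, hb₀s⟩ := hBs
  set W := nstar G B ∪ {t, s'} with hWdef
  have htW : t ∈ W := Or.inr (Or.inl rfl)
  -- b₀ belongs to nstar W
  have hb₀W : b₀ ∈ nstar G W := by
    rw [mem_nstar_iff]
    constructor
    · rintro (h | h)
      · have : b₀ ∈ B ∩ nstar G B := ⟨hb₀B, h⟩
        rw [nstar_disj_left] at this; exact this
      · rcases h with rfl | rfl
        · exact htB' hb₀B
        · exact hs'B hb₀B
    · rintro a (ha | ha) hadj
      · exact not_adj_of_mem_nstar ha hb₀B hadj.symm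
      · rcases ha with rfl | rfl
        · exact hb₀s (hNt ⟨hadj, hb₀B⟩)
        · exact hb₀s (hNs' ⟨hadj, hb₀B⟩)
  -- boundary of W is small
  have hbdryW : bdry G W ⊆ insert s (S \ {t, s'}) := by
    rintro v ⟨hvW, a, haW, hadj⟩
    have hvn : v ∉ nstar G B := fun h => hvW (Or.inl h)
    have hvts' : v ∉ ({t, s'} : Set V) := fun h => hvW (Or.inr h)
    rcases haW with ha | ha
    · rcases adj_mem_union_bdry ha hadj with h1 | h1
      · exact absurd h1 hvn
      · exact Or.inr ⟨bdry_nstar_subset G B h1, hvts'⟩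
    · by_cases hvB : v ∈ B
      · rcases ha with rfl | rfl
        · exact Or.inl (hNt ⟨hadj, hvB⟩)
        · exact Or.inl (hNs' ⟨hadj, hvB⟩)
      · have : v ∈ B ∪ S ∪ nstar G B := by rw [union_bdry_nstar]; trivial
        rcases this with (h | h) | h
        · exact absurd h hvB
        · exact Or.inr ⟨h, hvts'⟩
        · exact absurd h hvn
  -- size bookkeeping
  have hts'sub : ({t, s'} : Set V) ⊆ S := by
    rintro v (rfl | rfl)
    · exact htS
    · exact hs'S
  have hcard2 : ({t, s'} : Set V).ncard = 2 := Set.ncard_pair (Ne.symm hs't)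
  have hk2 : 2 ≤ k := by
    have := Set.ncard_le_ncard hts'sub (toFinite S)
    rw [hcard2, hSk] at this
    exact this
  have hSdiff : (S \ {t, s'}).ncard = k - 2 := by
    rw [Set.ncard_diff hts'sub (toFinite _), hSk, hcard2]
  have hubW : (bdry G W).ncard ≤ k - 1 := by
    have h1 : (bdry G W).ncard ≤ (insert s (S \ {t, s'})).ncard :=
      Set.ncard_le_ncard hbdryW (toFinite _)
    have h2 : (insert s (S \ {t, s'})).ncard ≤ (S \ {t, s'}).ncard + 1 :=
      Set.ncard_insert_le _ _
    omega
  have hlbW : k ≤ (bdry G W).ncard := k_le_ncard_bdry hG ⟨t, htW⟩ ⟨b₀, hb₀W⟩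
  omega

end SecE

section SecF
variable {F : SimpleGraph V}

lemma walk_cons_decomp {u w : V} (p : F.Walk u w) (hne : u ≠ w) :
    ∃ (z : V) (h : F.Adj u z) (r : F.Walk z w), p = SimpleGraph.Walk.cons h r := by
  cases p with
  | nil => exact absurd rfl hne
  | cons h r => exact ⟨_, h, r, rfl⟩

lemma cycle_start_two_edges {a : V} (d : F.Walk a a) (hd : d.IsCycle) :
    ∃ y z, y ≠ z ∧ s(a, y) ∈ d.edges ∧ s(a, z) ∈ d.edges := by
  cases d with
  | nil => exact absurd hd SimpleGraph.Walk.IsCycle.not_of_nil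
  | cons h1 q =>
    rename_i y₁
    have hy₁a : y₁ ≠ a := fun h => F.irrefl (h ▸ h1)
    obtain ⟨z, h2, r, hqr⟩ := walk_cons_decomp q.reverse hy₁a.symm
    have hz : s(a, z) ∈ q.edges := by
      have hz' : s(a, z) ∈ q.reverse.edges := by
        rw [hqr, SimpleGraph.Walk.edges_cons]
        exact List.mem_cons_self
      rwa [SimpleGraph.Walk.edges_reverse, List.mem_reverse] at hz'
    refine ⟨y₁, z, ?_, by
        rw [SimpleGraph.Walk.edges_cons]; exact List.mem_cons_self, by
        rw [SimpleGraph.Walk.edges_cons]; exact List.mem_cons_of_mem _ hz⟩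
    intro hEq
    subst hEq
    have hnodup := hd.isCircuit.isTrail.edges_nodup
    rw [SimpleGraph.Walk.edges_cons] at hnodup
    exact (List.nodup_cons.mp hnodup).1 hz

lemma cycle_other_neighbor {v : V} {c : F.Walk v v} (hc : c.IsCycle)
    {a b : V} (hab : s(a, b) ∈ c.edges) : ∃ b', b' ≠ b ∧ s(a, b') ∈ c.edges := by
  have ha : a ∈ c.support := c.fst_mem_support_of_mem_edges hab
  have hdc : (c.rotate a ha).IsCycle := hc.rotate ha
  have hmem : ∀ e : Sym2 V, e ∈ (c.rotate a ha).edges ↔ e ∈ c.edges :=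
    fun e => (c.rotate_edges a ha).mem_iff
  obtain ⟨y, z, hyz, hy, hz⟩ := cycle_start_two_edges (c.rotate a ha) hdc
  rw [hmem] at hy hz
  by_cases hby : b = y
  · subst hby
    exact ⟨z, fun h => hyz h.symm, hz⟩
  · exact ⟨y, fun h => hby h.symm, hy⟩

lemma cycle_exists_edge {v : V} {c : F.Walk v v} (hc : c.IsCycle) :
    ∃ a b, s(a, b) ∈ c.edges := by
  cases c with
  | nil => exact absurd hc SimpleGraph.Walk.IsCycle.not_of_nil
  | cons h q =>
    exact ⟨_, _, by rw [SimpleGraph.Walk.edges_cons]; exact List.mem_cons_self⟩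

end SecF

section SecG
variable {F : SimpleGraph V}

open SimpleGraph

/-- The root of the connected component of a vertex. -/
noncomputable def froot (F : SimpleGraph V) (x : V) : V := (F.connectedComponentMk x).out

lemma froot_reachable (F : SimpleGraph V) (x : V) : F.Reachable (froot F x) x := by
  rw [← SimpleGraph.ConnectedComponent.eq]
  exact (F.connectedComponentMk x).out_eq

lemma froot_adj {u w : V} (h : F.Adj u w) : froot F u = froot F w := by
  unfold froot
  rw [SimpleGraph.ConnectedComponent.eq.mpr h.reachable]

lemma froot_idem (F : SimpleGraph V) (x : V) : froot F (froot F x) = froot F x := by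
  unfold froot
  congr 1
  exact (F.connectedComponentMk x).out_eq

/-- The unique path from the root to `x`. -/
noncomputable def fpath (F : SimpleGraph V) (x : V) : F.Path (froot F x) x :=
  ((froot_reachable F x).some).toPath

/-- The last edge on the root path. -/
noncomputable def lastEdge (F : SimpleGraph V) (x : V) : Option (Sym2 V) :=
  ((fpath F x : F.Walk (froot F x) x)).edges.getLast?

lemma lastEdge_root (F : SimpleGraph V) (x : V) : lastEdge F (froot F x) = none := by
  set y := froot F x with hy
  have hyy : froot F y = y := froot_idem F x
  set p := (fpath F y : F.Walk (froot F y) y) with hp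
  have hpath : p.IsPath := (fpath F y).2
  have hcop : (p.copy hyy rfl).IsPath := by rwa [SimpleGraph.Walk.isPath_copy]
  have hnil : p.copy hyy rfl = SimpleGraph.Walk.nil :=
    SimpleGraph.Walk.isPath_iff_eq_nil.mp hcop
  have hedges : p.edges = [] := by
    have := congrArg SimpleGraph.Walk.edges hnil
    rwa [SimpleGraph.Walk.edges_copy, SimpleGraph.Walk.edges_nil] at this
  rw [lastEdge, ← hp, hedges]
  rfl

/-- The key dichotomy: each edge is the last edge of the root path of one of its ends. -/
lemma lastEdge_of_adj (hacyc : F.IsAcyclic) {u w : V} (h : F.Adj u w) :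
    lastEdge F w = some s(u, w) ∨ lastEdge F u = some s(w, u) := by
  classical
  set p := (fpath F u : F.Walk (froot F u) u) with hpdef
  have hppath : p.IsPath := (fpath F u).2
  have hrw : froot F u = froot F w := froot_adj h
  by_cases hmem : w ∈ p.support
  · -- w on the path to u: the path to u ends with the edge wu
    right
    have hdr : p.dropUntil w hmem = SimpleGraph.Walk.cons h.symm SimpleGraph.Walk.nil := by
      have h1 : (⟨p.dropUntil w hmem, hppath.dropUntil hmem⟩ : F.Path w u)
          = SimpleGraph.Path.singleton h.symm := hacyc.path_unique _ _
      have := congrArg Subtype.val h1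
      simpa [SimpleGraph.Path.singleton] using this
    have hspec : (p.takeUntil w hmem).append (p.dropUntil w hmem) = p :=
      SimpleGraph.Walk.take_spec p hmem
    have hedges : p.edges = (p.takeUntil w hmem).edges ++ [s(w, u)] := by
      conv_lhs => rw [← hspec]
      rw [SimpleGraph.Walk.edges_append, hdr]
      simp
    rw [lastEdge, ← hpdef, hedges, List.getLast?_concat]
  · -- w not on the path to u: the path to w is p + uw
    left
    have hext : (p.concat h).IsPath := by
      have h1 : (SimpleGraph.Walk.cons h.symm p.reverse).IsPath := by
        rw [SimpleGraph.Walk.cons_isPath_iff]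
        exact ⟨hppath.reverse, by rwa [SimpleGraph.Walk.support_reverse, List.mem_reverse]⟩
      have h2 := h1.reverse
      rw [SimpleGraph.Walk.reverse_cons, SimpleGraph.Walk.reverse_reverse] at h2
      exact h2
    set q := (fpath F w : F.Walk (froot F w) w) with hqdef
    have hqpath : q.IsPath := (fpath F w).2
    have hcop : (q.copy hrw.symm rfl).IsPath := by rwa [SimpleGraph.Walk.isPath_copy]
    have huniq : (⟨q.copy hrw.symm rfl, hcop⟩ : F.Path (froot F u) w)
        = ⟨p.concat h, hext⟩ := hacyc.path_unique _ _
    have hval : q.copy hrw.symm rfl = p.concat h := congrArg Subtype.val huniq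
    have hedges : q.edges = p.edges ++ [s(u, w)] := by
      have := congrArg SimpleGraph.Walk.edges hval
      rwa [SimpleGraph.Walk.edges_copy, SimpleGraph.Walk.edges_concat,
        List.concat_eq_append] at this
    rw [lastEdge, ← hqdef, hedges, List.getLast?_concat]

/-- A forest has at most `n - 1` edges. -/
theorem acyclic_ncard_edgeSet_le (hacyc : F.IsAcyclic) :
    F.edgeSet.ncard ≤ Fintype.card V - 1 := by
  classical
  rcases isEmpty_or_nonempty V with hV | hV
  · have : F.edgeSet = ∅ := by
      ext e
      simp only [mem_empty_iff_false, iff_false]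
      intro he
      induction e with
      | h u w => exact IsEmpty.false u
    rw [this, Set.ncard_empty]
    omega
  obtain ⟨v₀⟩ := hV
  set x₀ := froot F v₀ with hx₀
  -- every edge is the `lastEdge` of some vertex
  have hkey : ∀ e ∈ F.edgeSet, ∃ x : V, lastEdge F x = some e := by
    intro e he
    induction e with
    | h u w =>
      rw [SimpleGraph.mem_edgeSet] at he
      rcases lastEdge_of_adj hacyc he with h1 | h1
      · exact ⟨w, h1⟩
      · exact ⟨u, by rw [h1, Sym2.eq_swap]⟩
  set f : Sym2 V → V := fun e => if he : e ∈ F.edgeSet then (hkey e he).choose else v₀ with hf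
  have hfval : ∀ e ∈ F.edgeSet, lastEdge F (f e) = some e := by
    intro e he
    rw [hf]
    simp only [he, dif_pos]
    exact (hkey e he).choose_spec
  have hinj : Set.InjOn f F.edgeSet := by
    intro e₁ h₁ e₂ h₂ heq
    have := hfval e₁ h₁
    rw [heq, hfval e₂ h₂] at this
    exact (Option.some_injective _ this).symm
  have hrange : f '' F.edgeSet ⊆ univ \ {x₀} := by
    rintro y ⟨e, he, rfl⟩
    refine ⟨trivial, ?_⟩
    intro hy
    rw [mem_singleton_iff] at hy
    have h1 := hfval e he
    rw [hy, hx₀, lastEdge_root] at h1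
    cases h1
  have h1 : F.edgeSet.ncard = (f '' F.edgeSet).ncard := (Set.ncard_image_of_injOn hinj).symm
  have h2 : (f '' F.edgeSet).ncard ≤ (univ \ {x₀} : Set V).ncard :=
    Set.ncard_le_ncard hrange (toFinite _)
  have h3 : (univ \ {x₀} : Set V).ncard = Fintype.card V - 1 := by
    rw [Set.ncard_diff (subset_univ _) (toFinite _), Set.ncard_univ, Set.ncard_singleton,
      Nat.card_eq_fintype_card]
  omega

end SecG

theorem stmt17 (G : SimpleGraph V) (k : ℕ) (hG : KConn G k)
    (F : SimpleGraph V)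
    (hF : ∀ u v : V, F.Adj u v ↔ G.Adj u v ∧
        kappa (G.deleteEdges {s(u, v)}) u v + 1 = k ∧ k < deg G u ∧ k < deg G v) :
    F.IsAcyclic ∧ F.edgeSet.ncard ≤ Fintype.card V - 1 := by
  have hacyc : F.IsAcyclic := by
    intro v c hc
    exfalso
    set R : V → V → Prop := fun a b => s(a, b) ∈ c.edges with hRdef
    have hRsymm : ∀ {a b : V}, R a b → R b a := by
      intro a b hab
      show s(b, a) ∈ c.edges
      rw [Sym2.eq_swap]
      exact hab
    have hRF : ∀ {a b : V}, R a b → F.Adj a b := fun hab => c.adj_of_mem_edges hab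
    have hRadj : ∀ {a b : V}, R a b → G.Adj a b := fun hab => ((hF _ _).mp (hRF hab)).1
    have hRdeg : ∀ {a b : V}, R a b → k < deg G a := fun hab => ((hF _ _).mp (hRF hab)).2.2.1
    have hRsetup : ∀ {a b : V}, R a b → Nonempty (EdgeSetup G k a b) := by
      intro a b hab
      obtain ⟨h1, h2, h3, h4⟩ := (hF a b).mp (hRF hab)
      exact exists_edgeSetup hG h1 h2 h3 h4
    obtain ⟨x₀, y₀, he₀⟩ := cycle_exists_edge hc
    have hR₀ : R x₀ y₀ := he₀
    obtain ⟨E₀⟩ := hRsetup hR₀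
    have hNne : {n | ∃ A a b, Good G k R A a b ∧ A.ncard = n}.Nonempty :=
      ⟨E₀.P.ncard, E₀.P, x₀, y₀, Good.of_setup E₀ hR₀, rfl⟩
    set μ := sInf {n | ∃ A a b, Good G k R A a b ∧ A.ncard = n} with hμ
    have hmem : ∃ A a b, Good G k R A a b ∧ A.ncard = μ := Nat.sInf_mem hNne
    obtain ⟨B, s, t, hGood, hBcard⟩ := hmem
    have hmin : ∀ A a b, Good G k R A a b → μ ≤ A.ncard := by
      intro A a b h
      exact Nat.sInf_le ⟨A, a, b, h, rfl⟩
    obtain ⟨s', hs't, hss'⟩ := cycle_other_neighbor hc hGood.2.2.2.1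
    exact endgame hG hRsymm hRadj hRsetup hRdeg hmin hGood hBcard hss' hs't
  exact ⟨hacyc, acyclic_ncard_edgeSet_le hacyc⟩
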